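/- arXiv:0905.2254 — 5 statements merged into one kernel-verified Lean document; each statement's English description precedes it below -/
import Mathlib

section
/- For every real β > −1 and every real m (positive or negative), the ratio of the integral ∫₀ˣ t^β · (log(1/t))^m dt to the quantity x^(β+1) · (log(1/x))^m / (β+1) tends to 1 as x tends to 0 from the right; that is, ∫ x^β u^m dx = x^(β+1) u^m / (β+1) asymptotically, where u = log(1/x). -/
open Filter Real MeasureTheory Set

/-- `x ^ a * (-log x) ^ m → 0` as `x → 0⁺` when `a > 0`. -/
lemma aux_tendsto_rpow_neg_log (a m : ℝ) (ha : 0 < a) :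
    Tendsto (fun x : ℝ => x ^ a * (-Real.log x) ^ m) (nhdsWithin 0 (Set.Ioi 0)) (nhds 0) := by
  have h1 : Tendsto (fun x : ℝ => -Real.log x) (nhdsWithin 0 (Set.Ioi 0)) atTop :=
    tendsto_neg_atBot_atTop.comp Real.tendsto_log_nhdsGT_zero
  have h2 := (tendsto_rpow_mul_exp_neg_mul_atTop_nhds_zero m a ha).comp h1
  refine h2.congr' ?_
  filter_upwards [self_mem_nhdsWithin] with x hx
  have hx : (0:ℝ) < x := hx
  simp only [Function.comp]
  rw [mul_comm]
  congr 1
  rw [Real.rpow_def_of_pos hx]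
  congr 1
  ring

theorem integral_rpow_mul_log_inv_rpow_ratio_tendsto_one (β : ℝ) (hβ : -1 < β)
    (m : ℝ) :
    Tendsto (fun x : ℝ =>
        (∫ t in Set.Ioo (0 : ℝ) x, t ^ β * (Real.log (1 / t)) ^ m) /
          (x ^ (β + 1) * (Real.log (1 / x)) ^ m / (β + 1)))
      (nhdsWithin 0 (Set.Ioi 0)) (nhds 1) := by
  have hβ1 : (0:ℝ) < β + 1 := by linarith
  set f : ℝ → ℝ := fun t => t ^ β * (-Real.log t) ^ m with hf
  have hflog : ∀ t : ℝ, t ^ β * (Real.log (1/t)) ^ m = f t := by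
    intro t; simp [hf, one_div, Real.log_inv]
  set c : ℝ := m / (β + 1) with hc
  -- integrability on (0, 1/2)
  have hcontOn : ContinuousOn f (Set.Ioo (0:ℝ) 1) := by
    intro t ht
    have ht0 : 0 < t := ht.1
    have htlog : 0 < -Real.log t := by
      have := Real.log_neg ht0 ht.2
      linarith
    apply ContinuousWithinAt.mul
    · exact (Real.continuousAt_rpow_const t β (Or.inl ht0.ne')).continuousWithinAt
    · exact (((Real.continuousAt_log ht0.ne').neg).rpow_const
        (Or.inl htlog.ne')).continuousWithinAt
  have hint : IntegrableOn f (Set.Ioo (0:ℝ) (1/2)) := by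
    set γ : ℝ := (β - 1) / 2 with hγ
    have hγ1 : -1 < γ := by rw [hγ]; linarith
    have hγβ : 0 < β - γ := by rw [hγ]; linarith
    -- eventually |f t| ≤ t ^ γ near 0
    have h0 := aux_tendsto_rpow_neg_log (β - γ) m hγβ
    have hev : ∀ᶠ t in nhdsWithin 0 (Set.Ioi 0), |t ^ (β - γ)| * |(-Real.log t) ^ m| < 1 := by
      have := h0 (Metric.ball_mem_nhds (0:ℝ) one_pos)
      filter_upwards [this] with t ht
      simpa [Real.dist_eq, abs_mul] using ht
    rw [eventually_nhdsWithin_iff, Metric.eventually_nhds_iff] at hev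
    obtain ⟨δ, hδ0, hδ⟩ := hev
    set δ' : ℝ := min δ (1/2) with hδ'
    have hδ'0 : 0 < δ' := lt_min hδ0 (by norm_num)
    have h1 : IntegrableOn f (Set.Ioo 0 δ') := by
      have hbase : IntegrableOn (fun t : ℝ => t ^ γ) (Set.Ioo 0 δ') :=
        (intervalIntegral.integrableOn_Ioo_rpow_iff hδ'0).2 hγ1
      have hsub : Set.Ioo (0:ℝ) δ' ⊆ Set.Ioo 0 1 := Set.Ioo_subset_Ioo le_rfl
        (le_trans (min_le_right _ _) (by norm_num))
      refine Integrable.mono' hbase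
        ((hcontOn.mono hsub).aestronglyMeasurable measurableSet_Ioo) ?_
      filter_upwards [MeasureTheory.ae_restrict_mem measurableSet_Ioo] with t ht
      have ht0 : 0 < t := ht.1
      have htδ : t < δ := lt_of_lt_of_le ht.2 (min_le_left _ _)
      have key : |t ^ (β - γ)| * |(-Real.log t) ^ m| < 1 := by
        apply hδ (by simpa [Real.dist_eq, abs_of_pos ht0] using htδ) ht0
      have hfeq : f t = t ^ γ * (t ^ (β - γ) * (-Real.log t) ^ m) := by
        rw [hf]; rw [← mul_assoc, ← Real.rpow_add ht0]; ring_nf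
      rw [Real.norm_eq_abs, hfeq, abs_mul, abs_mul,
        abs_of_nonneg (Real.rpow_nonneg ht0.le γ)]
      calc t ^ γ * (|t ^ (β - γ)| * |(-Real.log t) ^ m|) ≤ t ^ γ * 1 := by
            exact mul_le_mul_of_nonneg_left key.le (Real.rpow_nonneg ht0.le γ)
        _ = t ^ γ := by ring
    have h2 : IntegrableOn f (Set.Icc δ' (1/2)) := by
      apply ContinuousOn.integrableOn_compact isCompact_Icc
      exact hcontOn.mono (fun t ht => ⟨lt_of_lt_of_le hδ'0 ht.1,
        lt_of_le_of_lt ht.2 (by norm_num)⟩)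
    have := h1.union h2
    exact this.mono (fun t ht => by
      rcases lt_or_ge t δ' with h | h
      · exact Or.inl ⟨ht.1, h⟩
      · exact Or.inr ⟨h, ht.2.le⟩) le_rfl
  have hint' : ∀ x ∈ Set.Ioc (0:ℝ) (1/2), IntervalIntegrable f volume 0 x := by
    intro x hx
    rw [intervalIntegrable_iff_integrableOn_Ioo_of_le hx.1.le]
    exact hint.mono (Set.Ioo_subset_Ioo le_rfl hx.2) le_rfl
  -- the primitive equals the Ioo-integral for positive x
  have hFeq : ∀ x : ℝ, 0 < x →
      (∫ t in Set.Ioo (0:ℝ) x, t ^ β * (Real.log (1/t)) ^ m) = ∫ t in (0:ℝ)..x, f t := by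
    intro x hx
    rw [intervalIntegral.integral_of_le hx.le, MeasureTheory.integral_Ioc_eq_integral_Ioo]
    exact setIntegral_congr_fun measurableSet_Ioo (fun t _ => hflog t)
  -- setup for L'Hopital
  set F : ℝ → ℝ := fun x => ∫ t in Set.Ioo (0:ℝ) x, t ^ β * (Real.log (1/t)) ^ m with hF
  set G : ℝ → ℝ := fun x => x ^ (β + 1) * (Real.log (1/x)) ^ m / (β + 1) with hG
  set G' : ℝ → ℝ := fun x => x ^ β * (-Real.log x) ^ (m - 1) * (-Real.log x - c) with hG'
  have hsmall : Set.Ioo (0:ℝ) (min (1/2) (Real.exp (-(1 + |c|)))) ∈ nhdsWithin (0:ℝ) (Set.Ioi 0) := by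
    apply Ioo_mem_nhdsGT_of_mem
    exact ⟨le_rfl, lt_min (by norm_num) (Real.exp_pos _)⟩
  have hmem : ∀ x ∈ Set.Ioo (0:ℝ) (min (1/2) (Real.exp (-(1 + |c|)))),
      0 < x ∧ x < 1/2 ∧ 1 + |c| < -Real.log x := by
    intro x hx
    refine ⟨hx.1, lt_of_lt_of_le hx.2 (min_le_left _ _), ?_⟩
    have hxe : x < Real.exp (-(1 + |c|)) := lt_of_lt_of_le hx.2 (min_le_right _ _)
    have := Real.log_lt_log hx.1 hxe
    rw [Real.log_exp] at this
    linarith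
  -- derivative of F
  have hFd : ∀ᶠ x in nhdsWithin (0:ℝ) (Set.Ioi 0), HasDerivAt F (f x) x := by
    filter_upwards [hsmall] with x hx
    obtain ⟨hx0, hx12, hxlog'⟩ := hmem x hx
    have hxlog : 0 < -Real.log x := by
      have := abs_nonneg c
      linarith
    have hd : HasDerivAt (fun y => ∫ t in (0:ℝ)..y, f t) (f x) x := by
      apply intervalIntegral.integral_hasDerivAt_right (hint' x ⟨hx0, hx12.le⟩)
      · exact hcontOn.stronglyMeasurableAtFilter isOpen_Ioo x ⟨hx0, by linarith⟩
      · apply ContinuousAt.mul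
        · exact Real.continuousAt_rpow_const x β (Or.inl hx0.ne')
        · exact ((Real.continuousAt_log hx0.ne').neg).rpow_const (Or.inl hxlog.ne')
    apply hd.congr_of_eventuallyEq
    filter_upwards [eventually_gt_nhds hx0] with y hy
    exact hFeq y hy
  -- derivative of G
  have hGd : ∀ᶠ x in nhdsWithin (0:ℝ) (Set.Ioi 0), HasDerivAt G (G' x) x := by
    filter_upwards [hsmall] with x hx
    obtain ⟨hx0, hx12, hxlog'⟩ := hmem x hx
    have hxlog : 0 < -Real.log x := by
      have := abs_nonneg c
      linarith
    have h1 : HasDerivAt (fun y : ℝ => y ^ (β + 1)) ((β + 1) * x ^ β) x := by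
      have := Real.hasDerivAt_rpow_const (p := β + 1) (Or.inl hx0.ne')
      simpa using this
    have h2 : HasDerivAt (fun y : ℝ => (-Real.log y) ^ m)
        (m * (-Real.log x) ^ (m - 1) * (-x⁻¹)) x := by
      have hlog : HasDerivAt (fun y : ℝ => -Real.log y) (-x⁻¹) x :=
        (Real.hasDerivAt_log hx0.ne').neg
      exact (Real.hasDerivAt_rpow_const (p := m) (Or.inl hxlog.ne')).comp x hlog
    have h3 := ((h1.mul h2).div_const (β + 1))
    have heq : ∀ᶠ y in nhds x, y ^ (β + 1) * (-Real.log y) ^ m / (β + 1) = G y := by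
      filter_upwards with y
      rw [hG]; simp [one_div, Real.log_inv]
    have h4 := h3.congr_of_eventuallyEq (heq.mono fun y hy => hy.symm)
    refine h4.congr_deriv ?_
    rw [hG']
    have e1 : x ^ (β + 1) = x ^ β * x := by
      rw [Real.rpow_add_one hx0.ne']
    have e2 : (-Real.log x) ^ m = (-Real.log x) ^ (m - 1) * (-Real.log x) := by
      rw [← Real.rpow_add_one hxlog.ne', sub_add_cancel]
    rw [e1, e2, hc]
    field_simp
    ring
  -- G' nonzero
  have hG'pos : ∀ᶠ x in nhdsWithin (0:ℝ) (Set.Ioi 0), 0 < G' x := by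
    filter_upwards [hsmall] with x hx
    obtain ⟨hx0, hx12, hxlog'⟩ := hmem x hx
    have hxlog : 0 < -Real.log x := by
      have := abs_nonneg c
      linarith
    have hcc : c < -Real.log x := lt_of_le_of_lt (le_trans (le_abs_self c) (by linarith)) hxlog'
    show 0 < x ^ β * (-Real.log x) ^ (m - 1) * (-Real.log x - c)
    have h1 := Real.rpow_pos_of_pos hx0 β
    have h2 := Real.rpow_pos_of_pos hxlog (m - 1)
    exact mul_pos (mul_pos h1 h2) (by linarith)
  have hG'ne : ∀ᶠ x in nhdsWithin (0:ℝ) (Set.Ioi 0), G' x ≠ 0 :=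
    hG'pos.mono fun x hx => hx.ne'
  -- F → 0
  have hFa : Tendsto F (nhdsWithin 0 (Set.Ioi 0)) (nhds 0) := by
    have hii : IntervalIntegrable f volume 0 (1/2) := hint' (1/2) ⟨by norm_num, le_rfl⟩
    have hcont := intervalIntegral.continuousOn_primitive_interval' hii
      (left_mem_uIcc (a := (0:ℝ)) (b := 1/2))
    have h0 : ContinuousWithinAt (fun y => ∫ t in (0:ℝ)..y, f t) (Set.uIcc 0 (1/2)) 0 :=
      hcont 0 left_mem_uIcc
    have h1 : Tendsto (fun y => ∫ t in (0:ℝ)..y, f t) (nhdsWithin 0 (Set.uIcc 0 (1/2)))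
        (nhds 0) := by simpa using h0.tendsto
    have h2 : Tendsto (fun y => ∫ t in (0:ℝ)..y, f t)
        (nhdsWithin 0 (Set.Ioo 0 (1/2))) (nhds 0) :=
      h1.mono_left (nhdsWithin_mono _ (fun y hy => by
        rw [Set.uIcc_of_le (by norm_num : (0:ℝ) ≤ 1/2)]
        exact ⟨hy.1.le, hy.2.le⟩))
    have h3 : Tendsto (fun y => ∫ t in (0:ℝ)..y, f t) (nhdsWithin 0 (Set.Ioi 0)) (nhds 0) :=
      h2.mono_left (nhdsWithin_le_of_mem (Ioo_mem_nhdsGT_of_mem ⟨le_rfl, by norm_num⟩))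
    refine h3.congr' ?_
    filter_upwards [self_mem_nhdsWithin] with x hx
    exact (hFeq x hx).symm
  -- G → 0
  have hGa : Tendsto G (nhdsWithin 0 (Set.Ioi 0)) (nhds 0) := by
    have h0 := (aux_tendsto_rpow_neg_log (β + 1) m hβ1).div_const (β + 1)
    rw [zero_div] at h0
    refine h0.congr ?_
    intro x
    rw [hG]; simp [one_div, Real.log_inv]
  -- f / G' → 1
  have hdiv : Tendsto (fun x => f x / G' x) (nhdsWithin 0 (Set.Ioi 0)) (nhds 1) := by
    have key : Tendsto (fun y : ℝ => y / (y - c)) atTop (nhds 1) := by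
      have h1 : Tendsto (fun y : ℝ => y - c) atTop atTop := tendsto_atTop_add_const_right _ _ tendsto_id
      have h2 : Tendsto (fun y : ℝ => c / (y - c)) atTop (nhds 0) :=
        Tendsto.div_atTop tendsto_const_nhds h1
      have h3 : Tendsto (fun y : ℝ => 1 + c / (y - c)) atTop (nhds 1) := by
        simpa using (tendsto_const_nhds (x := (1:ℝ)) (f := atTop)).add h2
      refine h3.congr' ?_
      filter_upwards [eventually_gt_atTop (c + 1)] with y hy
      have : y - c ≠ 0 := by
        have : (0:ℝ) < y - c := by linarith
        exact this.ne'
      field_simp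
      ring
    have hlogtop : Tendsto (fun x : ℝ => -Real.log x) (nhdsWithin 0 (Set.Ioi 0)) atTop :=
      tendsto_neg_atBot_atTop.comp Real.tendsto_log_nhdsGT_zero
    have h4 := key.comp hlogtop
    refine h4.congr' ?_
    filter_upwards [hsmall] with x hx
    obtain ⟨hx0, hx12, hxlog'⟩ := hmem x hx
    have hxlog : 0 < -Real.log x := by
      have := abs_nonneg c
      linarith
    have hcc : 0 < -Real.log x - c :=
      sub_pos.2 (lt_of_le_of_lt (le_trans (le_abs_self c) (by linarith)) hxlog')
    show (-Real.log x) / (-Real.log x - c) = f x / G' x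
    have e2 : (-Real.log x) ^ m = (-Real.log x) ^ (m - 1) * (-Real.log x) := by
      rw [← Real.rpow_add_one hxlog.ne', sub_add_cancel]
    show (-Real.log x) / (-Real.log x - c) =
      x ^ β * (-Real.log x) ^ m / (x ^ β * (-Real.log x) ^ (m - 1) * (-Real.log x - c))
    rw [e2]
    have hb : x ^ β ≠ 0 := (Real.rpow_pos_of_pos hx0 β).ne'
    have hp : ((-Real.log x) : ℝ) ^ (m - 1) ≠ 0 := (Real.rpow_pos_of_pos hxlog _).ne'
    field_simp
  exact HasDerivAt.lhopital_zero_nhdsGT hFd hGd hG'ne hFa hGa hdiv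
end

section
/- For every real β > −1, every real m, and every real a, the area ∫₀ˣ y(t) dt under the curve y(t) = a · t^β · (log(1/t))^m corresponding to the abscissa x satisfies: the ratio of ∫₀ˣ y(t) dt to the rectangle x · y(x) divided by β + 1 tends to 1 as x → 0⁺; that is, the area equals the rectangle formed by the abscissa and the ordinate divided by β + 1, asymptotically. -/
open Filter Real MeasureTheory

lemma aux_rpow_log_tendsto_zero {p : ℝ} (hp : 0 < p) (m : ℝ) :
    Tendsto (fun x : ℝ => x ^ p * (-Real.log x) ^ m) (nhdsWithin 0 (Set.Ioi 0)) (nhds 0) := by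
  have h := tendsto_rpow_mul_exp_neg_mul_atTop_nhds_zero m p hp
  have hlog : Tendsto (fun x : ℝ => -Real.log x) (nhdsWithin 0 (Set.Ioi 0)) atTop := by
    exact tendsto_neg_atBot_atTop.comp Real.tendsto_log_nhdsGT_zero
  have := h.comp hlog
  refine this.congr' ?_
  filter_upwards [self_mem_nhdsWithin] with x (hx : 0 < x)
  simp only [Function.comp]
  rw [Real.rpow_def_of_pos hx, mul_comm]
  ring_nf

lemma aux_ratio_tendsto_one {c : ℝ} (hc : 0 < c) (m : ℝ) :
    Tendsto (fun y : ℝ => c * y / (c * y - m)) atTop (nhds 1) := by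
  have h1 : Tendsto (fun y : ℝ => c * y - m) atTop atTop :=
    (tendsto_id.const_mul_atTop hc).atTop_add tendsto_const_nhds
  have h2 : Tendsto (fun y : ℝ => 1 + m / (c * y - m)) atTop (nhds 1) := by
    have := Tendsto.div_atTop (tendsto_const_nhds (x := m)) h1
    simpa using tendsto_const_nhds.add this
  refine h2.congr' ?_
  filter_upwards [h1.eventually_gt_atTop 0] with y hy
  field_simp
  ring

theorem area_ratio_rectangle_tendsto_one (β : ℝ) (hβ : -1 < β) (m a : ℝ)
    (ha : a ≠ 0) :
    Tendsto (fun x : ℝ =>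
        (∫ t in Set.Ioo (0 : ℝ) x, a * t ^ β * (Real.log (1 / t)) ^ m) /
          (x * (a * x ^ β * (Real.log (1 / x)) ^ m) / (β + 1)))
      (nhdsWithin 0 (Set.Ioi 0)) (nhds 1) := by
  have hβ1 : (0:ℝ) < β + 1 := by linarith
  set f : ℝ → ℝ := fun t => a * t ^ β * (Real.log (1 / t)) ^ m with hf_def
  -- f equals a * t^β * (-log t)^m on positive reals
  have hf_eq : ∀ t : ℝ, f t = a * t ^ β * (-Real.log t) ^ m := by
    intro t; simp [hf_def, Real.log_inv, one_div]
  -- measurability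
  have hfm : Measurable f := by
    rw [hf_def]; measurability
  -- integrability near zero
  set γ : ℝ := (β - 1) / 2 with hγ_def
  have hγ1 : -1 < γ := by rw [hγ_def]; linarith
  have hγβ : 0 < β - γ := by rw [hγ_def]; linarith
  have hO : f =O[nhdsWithin 0 (Set.Ioi 0)] fun t : ℝ => t ^ γ := by
    have hlim : Tendsto (fun t : ℝ => f t / t ^ γ) (nhdsWithin 0 (Set.Ioi 0)) (nhds 0) := by
      have := (aux_rpow_log_tendsto_zero hγβ m).const_mul a
      rw [mul_zero] at this
      refine this.congr' ?_
      filter_upwards [self_mem_nhdsWithin] with t (ht : 0 < t)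
      rw [hf_eq t, Real.rpow_sub ht]
      ring
    refine (Asymptotics.isLittleO_iff_tendsto' ?_).mpr hlim |>.isBigO
    filter_upwards [self_mem_nhdsWithin] with t (ht : 0 < t)
    intro h; exact absurd h (Real.rpow_pos_of_pos ht γ).ne'
  have hg_int : IntegrableAtFilter (fun t : ℝ => t ^ γ) (nhdsWithin 0 (Set.Ioi 0)) volume :=
    ⟨Set.Ioo 0 1, Ioo_mem_nhdsGT_of_mem ⟨le_rfl, zero_lt_one⟩,
      (intervalIntegral.integrableOn_Ioo_rpow_iff zero_lt_one).mpr hγ1⟩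
  have hint : IntegrableAtFilter f (nhdsWithin 0 (Set.Ioi 0)) volume :=
    hO.integrableAtFilter ⟨Set.univ, univ_mem, hfm.aestronglyMeasurable.restrict⟩ hg_int
  obtain ⟨s, hs, hsint⟩ := hint
  obtain ⟨ε, hε, hεs⟩ := mem_nhdsGT_iff_exists_Ioo_subset.mp hs
  have hε0 : 0 < ε := hε
  have hfint : IntegrableOn f (Set.Ioo 0 ε) volume := hsint.mono_set hεs
  -- the threshold
  set K : ℝ := max 1 (|m| / (β + 1)) + 1 with hK_def
  have hK0 : 0 < K := by positivity
  set b : ℝ := min (Real.exp (-K)) ε with hb_def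
  have hb0 : 0 < b := lt_min (Real.exp_pos _) hε0
  have hb1 : b < 1 := lt_of_le_of_lt (min_le_left _ _) (by
    rw [Real.exp_lt_one_iff]; linarith)
  -- facts for x ∈ Ioo 0 b
  have hL_pos : ∀ x ∈ Set.Ioo (0:ℝ) b, 0 < -Real.log x := by
    intro x hx
    have : Real.log x < 0 := Real.log_neg hx.1 (hx.2.trans hb1)
    linarith
  have hKey : ∀ x ∈ Set.Ioo (0:ℝ) b, 0 < (β + 1) * (-Real.log x) - m := by
    intro x hx
    have hxe : x < Real.exp (-K) := hx.2.trans_le (min_le_left _ _)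
    have : Real.log x < -K := by
      calc Real.log x < Real.log (Real.exp (-K)) :=
        Real.log_lt_log hx.1 hxe
      _ = -K := Real.log_exp _
    have hLK : K < -Real.log x := by linarith
    have h1 : |m| ≤ (β + 1) * K := by
      rw [hK_def]
      calc |m| = (β + 1) * (|m| / (β + 1)) := by field_simp
        _ ≤ (β + 1) * (max 1 (|m| / (β + 1)) + 1) := by
            apply mul_le_mul_of_nonneg_left _ hβ1.le
            have := le_max_right 1 (|m| / (β + 1)); linarith
    have h2 : (β + 1) * K < (β + 1) * (-Real.log x) := by
      exact mul_lt_mul_of_pos_left hLK hβ1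
    have := neg_abs_le m
    have := le_abs_self m
    linarith
  set F : ℝ → ℝ := fun x => ∫ t in Set.Ioo (0:ℝ) x, f t with hF_def
  set G : ℝ → ℝ := fun x => x * (a * x ^ β * (Real.log (1/x)) ^ m) / (β + 1) with hG_def
  set G' : ℝ → ℝ := fun x =>
    a * x ^ β * ((β+1) * (-Real.log x) ^ m - m * (-Real.log x) ^ (m-1)) / (β + 1) with hG'_def
  -- derivative of F
  have hF' : ∀ x ∈ Set.Ioo (0:ℝ) b, HasDerivAt F (f x) x := by
    intro x hx
    have hx0 : 0 < x := hx.1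
    have hx1 : x < 1 := hx.2.trans hb1
    have hii : IntervalIntegrable f volume 0 x := by
      rw [intervalIntegrable_iff_integrableOn_Ioc_of_le hx0.le]
      exact hfint.mono_set (fun t ht =>
        ⟨ht.1, lt_of_le_of_lt ht.2 (hx.2.trans_le (min_le_right _ _))⟩)
    have hlogpos : 0 < Real.log (1/x) := by
      rw [one_div, Real.log_inv]; exact hL_pos x hx
    have hcont : ContinuousAt f x := by
      have c1 : ContinuousAt (fun t : ℝ => t ^ β) x :=
        Real.continuousAt_rpow_const x β (Or.inl hx0.ne')
      have c2 : ContinuousAt (fun t : ℝ => Real.log (1/t)) x :=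
        (Real.continuousAt_log (by positivity)).comp
          (continuousAt_const.div continuousAt_id hx0.ne')
      have c3 : ContinuousAt (fun t : ℝ => (Real.log (1/t)) ^ m) x :=
        c2.rpow_const (Or.inl hlogpos.ne')
      exact (continuousAt_const.mul c1).mul c3
    have hmeasAt : StronglyMeasurableAtFilter f (nhds x) volume :=
      ⟨Set.univ, univ_mem, hfm.aestronglyMeasurable.restrict⟩
    have hd := intervalIntegral.integral_hasDerivAt_right hii hmeasAt hcont
    refine hd.congr_of_eventuallyEq ?_
    filter_upwards [IsOpen.mem_nhds isOpen_Ioi hx0] with y (hy : 0 < y)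
    rw [hF_def]; simp only
    rw [intervalIntegral.integral_of_le hy.le, MeasureTheory.integral_Ioc_eq_integral_Ioo]
  -- derivative of G
  have hG'' : ∀ x ∈ Set.Ioo (0:ℝ) b, HasDerivAt G (G' x) x := by
    intro x hx
    have hx0 : 0 < x := hx.1
    have hLx : 0 < -Real.log x := hL_pos x hx
    have h1 : HasDerivAt (fun y : ℝ => y ^ (β+1)) ((β+1) * x ^ β) x := by
      have := Real.hasDerivAt_rpow_const (x := x) (p := β+1) (Or.inl hx0.ne')
      simpa [add_sub_cancel_right] using this
    have hinner : HasDerivAt (fun y : ℝ => -Real.log y) (-x⁻¹) x :=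
      (Real.hasDerivAt_log hx0.ne').neg
    have houter := Real.hasDerivAt_rpow_const (x := -Real.log x) (p := m) (Or.inl hLx.ne')
    have h2 : HasDerivAt (fun y : ℝ => (-Real.log y) ^ m)
        (m * (-Real.log x) ^ (m-1) * -x⁻¹) x := by
      have := houter.comp x hinner; exact this
    have hh := (h1.mul h2).const_mul (a / (β+1))
    have heq : G =ᶠ[nhds x] fun y => a / (β+1) * (y ^ (β+1) * (-Real.log y) ^ m) := by
      filter_upwards [IsOpen.mem_nhds isOpen_Ioi hx0] with y (hy : 0 < y)
      rw [hG_def]; simp only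
      rw [one_div, Real.log_inv, Real.rpow_add_one hy.ne' β]; ring
    have hd := hh.congr_of_eventuallyEq heq
    refine hd.congr_deriv (Eq.symm ?_)
    rw [hG'_def]; simp only
    rw [Real.rpow_add_one hx0.ne' β]
    field_simp
    ring
  -- G' is nonzero
  have hG'ne : ∀ x ∈ Set.Ioo (0:ℝ) b, G' x ≠ 0 := by
    intro x hx
    have hx0 : 0 < x := hx.1
    have hL := hL_pos x hx
    have hk := hKey x hx
    have hfac : (β+1) * (-Real.log x) ^ m - m * (-Real.log x) ^ (m-1)
        = (-Real.log x) ^ (m-1) * ((β+1) * (-Real.log x) - m) := by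
      have h : (-Real.log x) ^ m = (-Real.log x) ^ (m-1) * (-Real.log x) := by
        rw [← Real.rpow_add_one hL.ne' (m-1), sub_add_cancel]
      rw [h]; ring
    rw [hG'_def]; simp only
    rw [hfac]
    have h1 : (0:ℝ) < (-Real.log x) ^ (m-1) := Real.rpow_pos_of_pos hL (m-1)
    have h2 : (0:ℝ) < x ^ β := Real.rpow_pos_of_pos hx0 β
    exact div_ne_zero (mul_ne_zero (mul_ne_zero ha h2.ne') (mul_pos h1 hk).ne') hβ1.ne'
  -- F tends to 0
  have hF0 : Tendsto F (nhdsWithin 0 (Set.Ioi 0)) (nhds 0) := by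
    have hicc : IntegrableOn f (Set.Icc 0 ε) volume := by
      rw [integrableOn_Icc_iff_integrableOn_Ioo]; exact hfint
    have hcontOn := intervalIntegral.continuousOn_primitive hicc
    have h0 : (0:ℝ) ∈ Set.Icc (0:ℝ) ε := ⟨le_rfl, hε0.le⟩
    have ht : Tendsto (fun x => ∫ t in Set.Ioc (0:ℝ) x, f t)
        (nhdsWithin 0 (Set.Icc 0 ε)) (nhds 0) := by
      have := hcontOn 0 h0
      simpa [ContinuousWithinAt] using this
    have hmono : nhdsWithin (0:ℝ) (Set.Ioi 0) ≤ nhdsWithin 0 (Set.Icc 0 ε) := by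
      rw [nhdsWithin_le_iff]
      exact Filter.mem_of_superset (Ioo_mem_nhdsGT_of_mem ⟨le_rfl, hε0⟩) Set.Ioo_subset_Icc_self
    refine (ht.mono_left hmono).congr fun y => ?_
    rw [hF_def]; simp only [MeasureTheory.integral_Ioc_eq_integral_Ioo]
  -- G tends to 0
  have hG0 : Tendsto G (nhdsWithin 0 (Set.Ioi 0)) (nhds 0) := by
    have := (aux_rpow_log_tendsto_zero hβ1 m).const_mul (a/(β+1))
    rw [mul_zero] at this
    refine this.congr' ?_
    filter_upwards [self_mem_nhdsWithin] with y (hy : 0 < y)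
    rw [hG_def]; simp only
    rw [one_div, Real.log_inv, Real.rpow_add_one hy.ne' β]; ring
  -- ratio of derivatives tends to 1
  have hdiv : Tendsto (fun x => f x / G' x) (nhdsWithin 0 (Set.Ioi 0)) (nhds 1) := by
    have h1 := (aux_ratio_tendsto_one hβ1 m).comp
      (tendsto_neg_atBot_atTop.comp Real.tendsto_log_nhdsGT_zero)
    refine h1.congr' ?_
    filter_upwards [Ioo_mem_nhdsGT_of_mem ⟨le_rfl, hb0⟩] with x hx
    have hx0 : 0 < x := hx.1
    have hL := hL_pos x hx
    have hk := hKey x hx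
    simp only [Function.comp]
    have hLm : (-Real.log x) ^ m = (-Real.log x) ^ (m-1) * (-Real.log x) := by
      rw [← Real.rpow_add_one hL.ne' (m-1), sub_add_cancel]
    set c : ℝ := a * x ^ β * (-Real.log x) ^ (m-1) with hc_def
    have hc : c ≠ 0 := by
      have h1' : (0:ℝ) < (-Real.log x) ^ (m-1) := Real.rpow_pos_of_pos hL (m-1)
      have h2' : (0:ℝ) < x ^ β := Real.rpow_pos_of_pos hx0 β
      exact mul_ne_zero (mul_ne_zero ha h2'.ne') h1'.ne'
    have e3 : (β+1) * (-Real.log x) - m ≠ 0 := hk.ne'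
    have hfx : f x = c * (-Real.log x) := by rw [hf_eq x, hLm, hc_def]; ring
    have hg'x : G' x = c * ((β+1) * (-Real.log x) - m) / (β+1) := by
      rw [hG'_def]; simp only
      rw [hLm, hc_def]; ring
    clear_value c
    rw [hfx, hg'x, div_div_eq_mul_div]
    rw [show c * -Real.log x * (β+1) = c * ((β+1) * -Real.log x) from by ring]
    rw [mul_div_mul_left _ _ hc]
  exact HasDerivAt.lhopital_zero_right_on_Ioo hb0 hF' hG'' hG'ne hF0 hG0 hdiv
end

section
/- For all real numbers α > 0 and β > 0 and every real n, the function t ↦ t^n · exp(−α / t^β) is integrable on the interval (0, x) for each x > 0. -/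
open Filter Real MeasureTheory Topology

theorem integrableOn_rpow_mul_exp_neg_inv_rpow (α β : ℝ) (hα : 0 < α)
    (hβ : 0 < β) (n : ℝ) (x : ℝ) (hx : 0 < x) :
    IntegrableOn (fun t : ℝ => t ^ n * Real.exp (-α / t ^ β)) (Set.Ioo 0 x) := by
  set g : ℝ → ℝ := fun t => t ^ n * Real.exp (-α / t ^ β) with hg
  set F : ℝ → ℝ := fun t => if t ≤ 0 then 0 else g t with hFdef
  have hlim : Tendsto g (𝓝[>] (0 : ℝ)) (𝓝 0) := by
    have h1 : Tendsto (fun t : ℝ => t ^ (-β)) (𝓝[>] (0 : ℝ)) atTop := by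
      have h := (tendsto_rpow_atTop hβ).comp tendsto_inv_nhdsGT_zero
      refine h.congr' ?_
      filter_upwards [self_mem_nhdsWithin] with t ht
      simp only [Function.comp]
      rw [← Real.rpow_neg_one t, ← Real.rpow_mul (le_of_lt (Set.mem_Ioi.mp ht)), neg_one_mul]
    have h2 := (tendsto_rpow_mul_exp_neg_mul_atTop_nhds_zero (-n / β) α hα).comp h1
    refine h2.congr' ?_
    filter_upwards [self_mem_nhdsWithin] with t ht
    simp only [Function.comp]
    have ht' : (0:ℝ) ≤ t := le_of_lt (Set.mem_Ioi.mp ht)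
    have hb : -β * (-n / β) = n := by field_simp
    rw [← Real.rpow_mul ht', hb, Real.rpow_neg ht', ← div_eq_mul_inv]
  have hFcont : ContinuousOn F (Set.Icc 0 x) := by
    intro t ht
    rcases eq_or_lt_of_le ht.1 with h0 | h0
    · subst h0
      have : ContinuousWithinAt F (Set.Ici (0:ℝ)) 0 := by
        rw [← continuousWithinAt_Ioi_iff_Ici]
        have hF0 : F 0 = 0 := by simp [hFdef]
        unfold ContinuousWithinAt
        rw [hF0]
        refine hlim.congr' ?_
        filter_upwards [self_mem_nhdsWithin] with s hs
        simp [hFdef, not_le.mpr (Set.mem_Ioi.mp hs)]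
      exact this.mono Set.Icc_subset_Ici_self
    · have hgc : ContinuousAt g t := by
        have h1 : ContinuousAt (fun s : ℝ => s ^ n) t :=
          Real.continuousAt_rpow_const t n (Or.inl h0.ne')
        have h2 : ContinuousAt (fun s : ℝ => Real.exp (-α / s ^ β)) t := by
          apply Real.continuous_exp.continuousAt.comp
          apply ContinuousAt.div continuousAt_const
          · exact Real.continuousAt_rpow_const t β (Or.inl h0.ne')
          · positivity
        exact h1.mul h2
      have hFc : ContinuousAt F t := by
        refine hgc.congr ?_
        filter_upwards [isOpen_Ioi.mem_nhds (Set.mem_Ioi.mpr h0)] with s hs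
        simp [hFdef, not_le.mpr (Set.mem_Ioi.mp hs)]
      exact hFc.continuousWithinAt
  have hFint : IntegrableOn F (Set.Icc 0 x) := hFcont.integrableOn_Icc
  refine ((hFint.mono_set Set.Ioo_subset_Icc_self).congr_fun ?_ measurableSet_Ioo)
  intro s hs
  simp [hFdef, not_le.mpr hs.1]
end

section
/- For all real numbers α > 0 and β > 0 and every real n (positive or negative), the ratio of the integral ∫₀ˣ t^n · exp(−α / t^β) dt to the quantity (1/(αβ)) · x^(n+β+1) · exp(−α / x^β) tends to 1 as x tends to 0 from the right; that is, ∫ x^n dx / v = x^(n+β+1) / (αβ · v) asymptotically, where v = exp(α / x^β). -/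
open Filter Real MeasureTheory

lemma auxCont (α β n : ℝ) (hβ : 0 < β) :
    ContinuousOn (fun t : ℝ => t ^ n * Real.exp (-α / t ^ β)) (Set.Ioi 0) := by
  intro x hx
  have hx0 : (0:ℝ) < x := hx
  have h1 : ContinuousAt (fun t : ℝ => t ^ n) x :=
    Real.continuousAt_rpow_const x n (Or.inl hx0.ne')
  have h2 : ContinuousAt (fun t : ℝ => t ^ β) x :=
    Real.continuousAt_rpow_const x β (Or.inl hx0.ne')
  have h3 : ContinuousAt (fun t : ℝ => -α / t ^ β) x :=
    continuousAt_const.div h2 (ne_of_gt (Real.rpow_pos_of_pos hx0 β))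
  exact (h1.mul (Real.continuous_exp.continuousAt.comp h3)).continuousWithinAt

lemma auxLim (α β : ℝ) (hα : 0 < α) (hβ : 0 < β) (m : ℝ) :
    Tendsto (fun t : ℝ => t ^ m * Real.exp (-α / t ^ β))
      (nhdsWithin 0 (Set.Ioi 0)) (nhds 0) := by
  have h0 : Tendsto (fun t : ℝ => t ^ β) (nhdsWithin 0 (Set.Ioi 0)) (nhdsWithin 0 (Set.Ioi 0)) := by
    rw [tendsto_nhdsWithin_iff]
    constructor
    · have := (Real.continuousAt_rpow_const 0 β (Or.inr hβ.le)).tendsto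
      rw [Real.zero_rpow hβ.ne'] at this
      exact this.mono_left nhdsWithin_le_nhds
    · filter_upwards [self_mem_nhdsWithin] with t ht
      exact Real.rpow_pos_of_pos ht β
  have h1 : Tendsto (fun t : ℝ => (t ^ β)⁻¹) (nhdsWithin 0 (Set.Ioi 0)) atTop :=
    tendsto_inv_nhdsGT_zero.comp h0
  have h2 := (tendsto_rpow_mul_exp_neg_mul_atTop_nhds_zero (-m/β) α hα).comp h1
  refine h2.congr' ?_
  filter_upwards [self_mem_nhdsWithin] with t ht
  have ht0 : (0:ℝ) < t := ht
  have e0 : (t ^ β)⁻¹ = t ^ (-β) := (Real.rpow_neg ht0.le β).symm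
  have e1 : ((t ^ β)⁻¹) ^ (-m/β) = t ^ m := by
    rw [e0, ← Real.rpow_mul ht0.le]
    congr 1
    field_simp
  have e2 : -α * (t ^ β)⁻¹ = -α / t ^ β := by rw [div_eq_mul_inv]
  simp only [Function.comp_apply]
  rw [e1, e2]

lemma auxInt (α β n : ℝ) (hα : 0 < α) (hβ : 0 < β) :
    MeasureTheory.IntegrableOn (fun t : ℝ => t ^ n * Real.exp (-α / t ^ β))
      (Set.Icc (0:ℝ) 1) := by
  set φ : ℝ → ℝ := fun t => t ^ n * Real.exp (-α / t ^ β) with hφdef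
  set Φ : ℝ → ℝ := fun t => if 0 < t then φ t else 0 with hΦdef
  have hcont : ContinuousOn Φ (Set.Icc 0 1) := by
    intro x hx
    rcases eq_or_lt_of_le hx.1 with h | h
    · subst h
      have hΦ0 : Φ 0 = 0 := by simp [hΦdef]
      rw [ContinuousWithinAt, hΦ0]
      have hsub : Set.Icc (0:ℝ) 1 ⊆ Set.Ici 0 := Set.Icc_subset_Ici_self
      refine Tendsto.mono_left ?_ (nhdsWithin_mono 0 hsub)
      have : Set.Ici (0:ℝ) = {0} ∪ Set.Ioi 0 := by
        ext t; simp [le_iff_lt_or_eq, or_comm, eq_comm]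
      rw [this, nhdsWithin_union, tendsto_sup]
      constructor
      · rw [nhdsWithin_singleton]
        simpa [hΦ0] using tendsto_pure_nhds Φ 0
      · refine (auxLim α β hα hβ n).congr' ?_
        filter_upwards [self_mem_nhdsWithin] with t ht
        have ht0 : (0:ℝ) < t := ht
        simp [hΦdef, hφdef, ht0]
    · have hmem : Set.Ioi (0:ℝ) ∈ nhds x := Ioi_mem_nhds h
      have heq : Φ =ᶠ[nhds x] φ := by
        filter_upwards [hmem] with t ht
        have ht0 : (0:ℝ) < t := ht
        simp [hΦdef, ht0]
      have : ContinuousAt φ x :=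
        (auxCont α β n hβ x h).continuousAt hmem
      exact (this.congr heq.symm).continuousWithinAt
  have hint : MeasureTheory.IntegrableOn Φ (Set.Icc (0:ℝ) 1) := hcont.integrableOn_Icc
  rw [integrableOn_Icc_iff_integrableOn_Ioc]
  refine (hint.mono_set Set.Ioc_subset_Icc_self).congr_fun ?_ measurableSet_Ioc
  intro t ht
  simp [hΦdef, ht.1]

theorem integral_rpow_mul_exp_neg_inv_rpow_ratio_tendsto_one (α β : ℝ)
    (hα : 0 < α) (hβ : 0 < β) (n : ℝ) :
    Tendsto (fun x : ℝ =>
        (∫ t in Set.Ioo (0 : ℝ) x, t ^ n * Real.exp (-α / t ^ β)) /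
          (1 / (α * β) * (x ^ (n + β + 1) * Real.exp (-α / x ^ β))))
      (nhdsWithin 0 (Set.Ioi 0)) (nhds 1) := by
  set φ : ℝ → ℝ := fun t => t ^ n * Real.exp (-α / t ^ β) with hφdef
  set f : ℝ → ℝ := fun x => ∫ t in Set.Ioo (0 : ℝ) x, φ t with hfdef
  set g : ℝ → ℝ := fun x => 1 / (α * β) * (x ^ (n + β + 1) * Real.exp (-α / x ^ β)) with hgdef
  set g' : ℝ → ℝ := fun x =>
    1 / (α * β) * (Real.exp (-α / x ^ β) * ((n + β + 1) * x ^ (n + β) + α * β * x ^ n))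
    with hg'def
  have hIoo : Set.Ioo (0:ℝ) 1 ∈ nhdsWithin (0:ℝ) (Set.Ioi 0) := by
    apply Ioo_mem_nhdsGT_of_mem
    exact ⟨le_refl _, one_pos⟩
  have hint : MeasureTheory.IntegrableOn φ (Set.Icc (0:ℝ) 1) := auxInt α β n hα hβ
  -- f equals the primitive for x in Ioo 0 1
  have hfeq : ∀ x : ℝ, 0 < x → f x = ∫ t in (0:ℝ)..x, φ t := by
    intro x hx
    rw [hfdef]
    simp only
    rw [← MeasureTheory.integral_Ioc_eq_integral_Ioo, intervalIntegral.integral_of_le hx.le]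
  -- derivative of f
  have hff' : ∀ᶠ x in nhdsWithin (0:ℝ) (Set.Ioi 0), HasDerivAt f (φ x) x := by
    filter_upwards [hIoo] with x hx
    have hx0 : (0:ℝ) < x := hx.1
    have hInt : IntervalIntegrable φ volume 0 x := by
      rw [intervalIntegrable_iff_integrableOn_Ioc_of_le hx0.le]
      exact hint.mono_set (Set.Ioc_subset_Icc_self.trans
        (Set.Icc_subset_Icc le_rfl hx.2.le))
    have hmeas : StronglyMeasurableAtFilter φ (nhds x) :=
      (auxCont α β n hβ).stronglyMeasurableAtFilter isOpen_Ioi _ hx0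
    have hca : ContinuousAt φ x := (auxCont α β n hβ x hx0).continuousAt (Ioi_mem_nhds hx0)
    have hF : HasDerivAt (fun u => ∫ t in (0:ℝ)..u, φ t) (φ x) x :=
      intervalIntegral.integral_hasDerivAt_right hInt hmeas hca
    refine hF.congr_of_eventuallyEq ?_
    filter_upwards [Ioi_mem_nhds hx0] with y hy
    exact hfeq y hy
  -- derivative of g
  have hgg' : ∀ᶠ x in nhdsWithin (0:ℝ) (Set.Ioi 0), HasDerivAt g (g' x) x := by
    filter_upwards [self_mem_nhdsWithin] with x hx
    have hx0 : (0:ℝ) < x := hx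
    have h1 : HasDerivAt (fun y : ℝ => y ^ (n + β + 1)) ((n + β + 1) * x ^ (n + β)) x := by
      have := Real.hasDerivAt_rpow_const (x := x) (p := n + β + 1) (Or.inl hx0.ne')
      simpa [add_sub_cancel_right] using this
    have h2 : HasDerivAt (fun y : ℝ => -α * y ^ (-β)) (-α * (-β * x ^ (-β - 1))) x := by
      have := Real.hasDerivAt_rpow_const (x := x) (p := -β) (Or.inl hx0.ne')
      have h := this.const_mul (-α)
      simpa [sub_eq_add_neg, neg_add] using h
    have h2' : HasDerivAt (fun y : ℝ => -α / y ^ β) (-α * (-β * x ^ (-β - 1))) x := by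
      refine h2.congr_of_eventuallyEq ?_
      filter_upwards [Ioi_mem_nhds hx0] with y hy
      rw [Real.rpow_neg (le_of_lt hy), div_eq_mul_inv]
    have h3 : HasDerivAt (fun y : ℝ => Real.exp (-α / y ^ β))
        (Real.exp (-α / x ^ β) * (-α * (-β * x ^ (-β - 1)))) x := h2'.exp
    have h4 := (h1.mul h3).const_mul (1 / (α * β))
    have key : x ^ (n + β + 1) * x ^ (-β - 1) = x ^ n := by
      rw [← Real.rpow_add hx0]
      ring_nf
    have hval : 1 / (α * β) * ((n + β + 1) * x ^ (n + β) * Real.exp (-α / x ^ β) +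
        x ^ (n + β + 1) * (Real.exp (-α / x ^ β) * (-α * (-β * x ^ (-β - 1))))) = g' x := by
      rw [hg'def]
      simp only
      rw [show x ^ (n + β + 1) * (Real.exp (-α / x ^ β) * (-α * (-β * x ^ (-β - 1))))
          = Real.exp (-α / x ^ β) * (α * β * (x ^ (n + β + 1) * x ^ (-β - 1))) by ring, key]
      ring
    rw [hval] at h4
    exact h4
  -- denominator eventually nonzero and ratio limit
  have hden : Tendsto (fun x : ℝ => (n + β + 1) * x ^ β + α * β)
      (nhdsWithin 0 (Set.Ioi 0)) (nhds (α * β)) := by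
    have hb : Tendsto (fun x : ℝ => x ^ β) (nhdsWithin 0 (Set.Ioi 0)) (nhds 0) := by
      have := (Real.continuousAt_rpow_const 0 β (Or.inr hβ.le)).tendsto
      rw [Real.zero_rpow hβ.ne'] at this
      exact this.mono_left nhdsWithin_le_nhds
    have := (hb.const_mul (n + β + 1)).add_const (α * β)
    simpa using this
  have hαβ : (0:ℝ) < α * β := mul_pos hα hβ
  have hdenpos : ∀ᶠ x in nhdsWithin (0:ℝ) (Set.Ioi 0),
      0 < (n + β + 1) * x ^ β + α * β :=
    hden.eventually (eventually_gt_nhds hαβ)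
  have hg' : ∀ᶠ x in nhdsWithin (0:ℝ) (Set.Ioi 0), g' x ≠ 0 := by
    filter_upwards [self_mem_nhdsWithin, hdenpos] with x hx hdx
    have hx0 : (0:ℝ) < x := hx
    have hxβ : x ^ (n + β) = x ^ n * x ^ β := by rw [← Real.rpow_add hx0]
    have : g' x = 1 / (α * β) * (Real.exp (-α / x ^ β) *
        (x ^ n * ((n + β + 1) * x ^ β + α * β))) := by
      rw [hg'def]; simp only; rw [hxβ]; ring
    rw [this]
    positivity
  have hfa : Tendsto f (nhdsWithin (0:ℝ) (Set.Ioi 0)) (nhds 0) := by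
    have hP : ContinuousOn (fun x => ∫ t in Set.Ioc (0:ℝ) x, φ t) (Set.Icc 0 1) :=
      intervalIntegral.continuousOn_primitive hint
    have h0 : (∫ t in Set.Ioc (0:ℝ) (0:ℝ), φ t) = 0 := by simp
    have hcw := hP 0 (Set.mem_Icc.2 ⟨le_refl _, zero_le_one⟩)
    rw [ContinuousWithinAt, h0] at hcw
    have hle : nhdsWithin (0:ℝ) (Set.Ioi 0) ≤ nhdsWithin (0:ℝ) (Set.Icc 0 1) :=
      nhdsWithin_le_of_mem (Filter.mem_of_superset hIoo (fun t ht => ⟨ht.1.le, ht.2.le⟩))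
    have := hcw.mono_left hle
    refine this.congr' ?_
    filter_upwards [self_mem_nhdsWithin] with x hx
    rw [hfdef]
    simp only
    rw [MeasureTheory.integral_Ioc_eq_integral_Ioo]
  have hga : Tendsto g (nhdsWithin (0:ℝ) (Set.Ioi 0)) (nhds 0) := by
    have := (auxLim α β hα hβ (n + β + 1)).const_mul (1 / (α * β))
    rw [mul_zero] at this
    exact this
  have hdiv : Tendsto (fun x => φ x / g' x) (nhdsWithin (0:ℝ) (Set.Ioi 0)) (nhds 1) := by
    have hlim : Tendsto (fun x : ℝ => α * β / ((n + β + 1) * x ^ β + α * β))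
        (nhdsWithin 0 (Set.Ioi 0)) (nhds 1) := by
      have := (tendsto_const_nhds (x := α * β)
        (f := nhdsWithin (0:ℝ) (Set.Ioi 0))).div hden hαβ.ne'
      simpa [div_self hαβ.ne', Pi.div_def] using this
    refine hlim.congr' ?_
    filter_upwards [self_mem_nhdsWithin, hdenpos] with x hx hdx
    have hx0 : (0:ℝ) < x := hx
    have hxn : (0:ℝ) < x ^ n := Real.rpow_pos_of_pos hx0 n
    have hxβ : x ^ (n + β) = x ^ n * x ^ β := by rw [← Real.rpow_add hx0]
    have he : (0:ℝ) < Real.exp (-α / x ^ β) := Real.exp_pos _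
    have hne : x ^ n * Real.exp (-α / x ^ β) ≠ 0 := by positivity
    have e1 : g' x = x ^ n * Real.exp (-α / x ^ β) *
        (((n + β + 1) * x ^ β + α * β) / (α * β)) := by
      rw [hg'def]
      simp only
      rw [hxβ]
      ring
    rw [hφdef]
    simp only
    rw [e1, div_mul_cancel_left₀ hne, inv_div]
  exact HasDerivAt.lhopital_zero_nhdsGT hff' hgg' hg' hfa hga hdiv
end

section
/- For all real numbers α > 0 and β > 0 and all real numbers k and m (positive or negative), the ratio of the integral ∫₀ˣ t^k · (log(1/t))^m · exp(−α / t^β) dt to the quantity (1/(αβ)) · x^(k+β+1) · (log(1/x))^m · exp(−α / x^β) tends to 1 as x tends to 0 from the right; that is, ∫ x^k u^m dx / v = x^(k+β+1) u^m / (αβ · v) asymptotically, where u = log(1/x) and v = exp(α / x^β). -/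
open Filter Real MeasureTheory Topology

-- core: z^c * (log z)^m scaled * exp(-αz) → 0
lemma aux_tendsto_atTop (a c m d : ℝ) (ha : 0 < a) (hd : 0 < d) :
    Tendsto (fun z : ℝ => z ^ c * (d * Real.log z) ^ m * Real.exp (-a * z)) atTop (𝓝 0) := by
  set M := max m 0 with hM
  have hsq := tendsto_rpow_mul_exp_neg_mul_atTop_nhds_zero (c + M) a ha
  apply squeeze_zero_norm' _ hsq
  have h1 : ∀ᶠ z : ℝ in atTop, (1:ℝ) ≤ d * Real.log z := by
    have := (Real.tendsto_log_atTop.const_mul_atTop hd).eventually_ge_atTop 1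
    exact this
  have h2 : ∀ᶠ z : ℝ in atTop, d * Real.log z ≤ z := by
    have h := (Real.isLittleO_log_id_atTop.const_mul_left d).bound one_pos
    filter_upwards [h, eventually_ge_atTop (1:ℝ), h1] with z hz hz1 hz1'
    have : |d * Real.log z| ≤ 1 * |z| := by
      rw [abs_mul]; simpa [Real.norm_eq_abs, abs_mul] using hz
    calc d * Real.log z ≤ |d * Real.log z| := le_abs_self _
      _ ≤ |z| := by linarith
      _ = z := abs_of_nonneg (by linarith)
  filter_upwards [h1, h2, eventually_ge_atTop (1:ℝ)] with z h1 h2 hz1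
  have hz0 : (0:ℝ) < z := by linarith
  have hb0 : (0:ℝ) ≤ d * Real.log z := by linarith
  have hnn : 0 ≤ z ^ c * (d * Real.log z) ^ m * Real.exp (-a * z) := by
    positivity
  rw [Real.norm_eq_abs, abs_of_nonneg hnn]
  have hbm : (d * Real.log z) ^ m ≤ z ^ M := by
    calc (d * Real.log z) ^ m ≤ (d * Real.log z) ^ M :=
          Real.rpow_le_rpow_of_exponent_le h1 (le_max_left _ _)
      _ ≤ z ^ M := Real.rpow_le_rpow hb0 h2 (le_max_right _ _)
  calc z ^ c * (d * Real.log z) ^ m * Real.exp (-a * z)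
      ≤ z ^ c * z ^ M * Real.exp (-a * z) := by
        have : 0 ≤ z ^ c := Real.rpow_nonneg hz0.le c
        have hE : (0:ℝ) < Real.exp (-a * z) := Real.exp_pos _
        have := mul_le_mul_of_nonneg_left hbm this
        nlinarith
    _ = z ^ (c + M) * Real.exp (-a * z) := by rw [← Real.rpow_add hz0]

lemma key_tendsto_zero (a b k m : ℝ) (ha : 0 < a) (hb : 0 < b) :
    Tendsto (fun x : ℝ => x ^ k * (Real.log (1 / x)) ^ m * Real.exp (-a / x ^ b))
      (nhdsWithin 0 (Set.Ioi 0)) (𝓝 0) := by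
  have hsub : Tendsto (fun x : ℝ => x ^ (-b)) (nhdsWithin 0 (Set.Ioi 0)) atTop := by
    have h1 : Tendsto (fun x : ℝ => x⁻¹) (nhdsWithin 0 (Set.Ioi 0)) atTop :=
      tendsto_inv_nhdsGT_zero
    have h2 : Tendsto (fun y : ℝ => y ^ b) atTop atTop := tendsto_rpow_atTop hb
    apply (h2.comp h1).congr'
    filter_upwards [self_mem_nhdsWithin] with x (hx : 0 < x)
    simp only [Function.comp]
    rw [Real.inv_rpow hx.le, ← Real.rpow_neg hx.le]
  have hg := aux_tendsto_atTop a (-k/b) m (1/b) ha (by positivity)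
  apply (hg.comp hsub).congr'
  filter_upwards [self_mem_nhdsWithin] with x (hx : 0 < x)
  have hxb : (0:ℝ) < x ^ (-b) := Real.rpow_pos_of_pos hx _
  simp only [Function.comp]
  congr 1
  · congr 1
    · rw [← Real.rpow_mul hx.le]
      congr 1
      field_simp
    · congr 1
      rw [Real.log_rpow hx, one_div x, Real.log_inv]
      field_simp
  · congr 1
    rw [div_eq_mul_inv, ← Real.rpow_neg hx.le]

lemma deriv_G (α β k m : ℝ) (hα : 0 < α) (hβ : 0 < β) {x : ℝ} (hx : 0 < x) (hx1 : x < 1) :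
    HasDerivAt (fun x : ℝ => 1 / (α * β) *
        (x ^ (k + β + 1) * (Real.log (1 / x)) ^ m * Real.exp (-α / x ^ β)))
      ((x ^ k * (Real.log (1 / x)) ^ m * Real.exp (-α / x ^ β)) *
        (1 + ((k + β + 1) * x ^ β - m * x ^ β / Real.log (1 / x)) / (α * β))) x := by
  have hu : 0 < Real.log (1 / x) := by
    rw [one_div, Real.log_inv]
    simpa using Real.log_neg hx hx1
  have hxb : (0:ℝ) < x ^ β := Real.rpow_pos_of_pos hx β
  -- derivative of x ^ (k+β+1)
  have hP : HasDerivAt (fun x : ℝ => x ^ (k + β + 1))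
      ((k + β + 1) * x ^ (k + β + 1 - 1)) x :=
    Real.hasDerivAt_rpow_const (Or.inl hx.ne')
  -- derivative of log (1/x)
  have hinv : HasDerivAt (fun x : ℝ => 1 / x) (-(x ^ 2)⁻¹) x := by
    simpa [one_div] using hasDerivAt_inv hx.ne'
  have hlog : HasDerivAt (fun x : ℝ => Real.log (1 / x)) ((1 / x)⁻¹ * -(x ^ 2)⁻¹) x :=
    (Real.hasDerivAt_log (by positivity)).comp x hinv
  have hU : HasDerivAt (fun x : ℝ => (Real.log (1 / x)) ^ m)
      ((1 / x)⁻¹ * -(x ^ 2)⁻¹ * m * (Real.log (1 / x)) ^ (m - 1)) x :=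
    hlog.rpow_const (Or.inl hu.ne')
  -- derivative of exp (-α / x^β)
  have hxbder : HasDerivAt (fun x : ℝ => x ^ β) (β * x ^ (β - 1)) x :=
    Real.hasDerivAt_rpow_const (Or.inl hx.ne')
  have hw : HasDerivAt (fun x : ℝ => -α / x ^ β)
      (-α * (-(β * x ^ (β - 1)) / (x ^ β) ^ 2)) x := by
    simpa [div_eq_mul_inv] using (hxbder.inv hxb.ne').const_mul (-α)
  have hE : HasDerivAt (fun x : ℝ => Real.exp (-α / x ^ β))
      (Real.exp (-α / x ^ β) * (-α * (-(β * x ^ (β - 1)) / (x ^ β) ^ 2))) x := by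
    simpa [mul_comm] using hw.exp
  have hfull := ((hP.mul hU).mul hE).const_mul (1 / (α * β))
  refine hfull.congr_deriv ?_
  simp only [Pi.mul_apply]
  have e1 : x ^ (k + β + 1 - 1) = x ^ k * x ^ β := by
    rw [show k + β + 1 - 1 = k + β by ring, Real.rpow_add hx]
  have e2 : x ^ (k + β + 1) = x ^ k * x ^ β * x := by
    rw [show k + β + 1 = k + β + 1 by ring, Real.rpow_add hx, Real.rpow_add hx, Real.rpow_one]
  have e3 : (Real.log (1 / x)) ^ (m - 1) = (Real.log (1 / x)) ^ m / Real.log (1 / x) := by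
    rw [Real.rpow_sub hu, Real.rpow_one]
  have e4 : x ^ (β - 1) = x ^ β / x := by
    rw [Real.rpow_sub hx, Real.rpow_one]
  rw [e1, e2, e3, e4]
  have hab : α * β ≠ 0 := by positivity
  field_simp
  ring

theorem integral_rpow_log_exp_ratio_tendsto_one (α β : ℝ) (hα : 0 < α)
    (hβ : 0 < β) (k m : ℝ) :
    Tendsto (fun x : ℝ =>
        (∫ t in Set.Ioo (0 : ℝ) x,
            t ^ k * (Real.log (1 / t)) ^ m * Real.exp (-α / t ^ β)) /
          (1 / (α * β) *
            (x ^ (k + β + 1) * (Real.log (1 / x)) ^ m * Real.exp (-α / x ^ β))))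
      (nhdsWithin 0 (Set.Ioi 0)) (nhds 1) := by
  set f : ℝ → ℝ := fun t => t ^ k * (Real.log (1 / t)) ^ m * Real.exp (-α / t ^ β) with hf
  set ψ : ℝ → ℝ := fun x =>
    1 + ((k + β + 1) * x ^ β - m * x ^ β / Real.log (1 / x)) / (α * β) with hψdef
  have hf0 : Tendsto f (nhdsWithin 0 (Set.Ioi 0)) (𝓝 0) := key_tendsto_zero α β k m hα hβ
  -- positivity of f on (0,1)
  have hfpos : ∀ x : ℝ, 0 < x → x < 1 → 0 < f x := by
    intro x hx hx1
    have hu : 0 < Real.log (1 / x) := by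
      rw [one_div, Real.log_inv]; simpa using Real.log_neg hx hx1
    have : 0 < x ^ k := Real.rpow_pos_of_pos hx k
    have : 0 < (Real.log (1 / x)) ^ m := Real.rpow_pos_of_pos hu m
    positivity
  -- ψ tends to 1
  have hxb0 : Tendsto (fun x : ℝ => x ^ β) (nhdsWithin 0 (Set.Ioi 0)) (𝓝 0) := by
    have := (Real.continuousAt_rpow_const 0 β (Or.inr hβ.le)).tendsto.mono_left
      (nhdsWithin_le_nhds (s := Set.Ioi (0:ℝ)))
    simpa [Real.zero_rpow hβ.ne'] using this
  have hlu : Tendsto (fun x : ℝ => (Real.log (1 / x))⁻¹) (nhdsWithin 0 (Set.Ioi 0)) (𝓝 0) := by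
    have h1 : Tendsto (fun x : ℝ => Real.log (1 / x)) (nhdsWithin 0 (Set.Ioi 0)) atTop :=
      (Real.tendsto_log_atTop.comp tendsto_inv_nhdsGT_zero).congr
        (fun x => by simp [Function.comp, one_div])
    exact h1.inv_tendsto_atTop
  have hψ : Tendsto ψ (nhdsWithin 0 (Set.Ioi 0)) (𝓝 1) := by
    have : Tendsto (fun x : ℝ =>
        1 + ((k + β + 1) * x ^ β - m * (x ^ β * (Real.log (1 / x))⁻¹)) / (α * β))
        (nhdsWithin 0 (Set.Ioi 0)) (𝓝 (1 + ((k + β + 1) * 0 - m * (0 * 0)) / (α * β))) := by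
      exact tendsto_const_nhds.add
        ((((tendsto_const_nhds.mul hxb0).sub (tendsto_const_nhds.mul (hxb0.mul hlu))).div_const _))
    simp only [mul_zero, zero_mul, sub_zero, zero_div, add_zero] at this
    apply this.congr
    intro x
    simp [hψdef, div_eq_mul_inv, mul_assoc]
  -- choose b
  have hev : ∀ᶠ x in nhdsWithin 0 (Set.Ioi 0), (‖f x‖ ≤ 1 ∧ 1/2 < ψ x) ∧ x < 1 := by
    have h1 : ∀ᶠ x in nhdsWithin 0 (Set.Ioi 0), ‖f x‖ < 1 := by
      have := hf0.norm
      simp only [norm_zero] at this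
      exact this.eventually_lt_const one_pos
    have h2 := hψ.eventually_const_lt (by norm_num : (1:ℝ)/2 < 1)
    have h3 : ∀ᶠ x : ℝ in nhdsWithin 0 (Set.Ioi 0), x < 1 := by
      have : Tendsto (fun x : ℝ => x) (nhdsWithin 0 (Set.Ioi 0)) (𝓝 0) :=
        tendsto_id.mono_left nhdsWithin_le_nhds
      exact this.eventually_lt_const one_pos
    filter_upwards [h1, h2, h3] with x hx1 hx2 hx3
    exact ⟨⟨hx1.le, hx2⟩, hx3⟩
  obtain ⟨b, hb0, hbsub⟩ := mem_nhdsGT_iff_exists_Ioo_subset.mp hev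
  have hb0' : (0:ℝ) < b := hb0
  -- continuity of f on (0,1)
  have hcontAt : ∀ t : ℝ, 0 < t → t < 1 → ContinuousAt f t := by
    intro t ht ht1
    have hu : 0 < Real.log (1 / t) := by
      rw [one_div, Real.log_inv]; simpa using Real.log_neg ht ht1
    have htb : (0:ℝ) < t ^ β := Real.rpow_pos_of_pos ht β
    have c1 : ContinuousAt (fun t : ℝ => t ^ k) t :=
      Real.continuousAt_rpow_const t k (Or.inl ht.ne')
    have cinv : ContinuousAt (fun t : ℝ => 1 / t) t :=
      continuousAt_const.div continuousAt_id ht.ne'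
    have c2 : ContinuousAt (fun t : ℝ => (Real.log (1 / t)) ^ m) t := by
      have clog : ContinuousAt (fun t : ℝ => Real.log (1 / t)) t :=
        (Real.continuousAt_log (by positivity)).comp cinv
      exact clog.rpow_const (Or.inl hu.ne')
    have c3 : ContinuousAt (fun t : ℝ => Real.exp (-α / t ^ β)) t := by
      have ctb : ContinuousAt (fun t : ℝ => t ^ β) t :=
        Real.continuousAt_rpow_const t β (Or.inl ht.ne')
      exact Real.continuous_exp.continuousAt.comp (continuousAt_const.div ctb htb.ne')
    exact (c1.mul c2).mul c3
  set b' : ℝ := min b 1 with hb'def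
  have hb'0 : 0 < b' := lt_min hb0' one_pos
  have hb'1 : b' ≤ 1 := min_le_right _ _
  have hb'b : b' ≤ b := min_le_left _ _
  have hsub' : Set.Ioo (0:ℝ) b' ⊆ Set.Ioo 0 b := Set.Ioo_subset_Ioo le_rfl hb'b
  have hmem : ∀ x ∈ Set.Ioo (0:ℝ) b', 0 < x ∧ x < 1 ∧ ‖f x‖ ≤ 1 ∧ 1/2 < ψ x := by
    intro x hx
    obtain ⟨⟨h1, h2⟩, h3⟩ := hbsub (hsub' hx)
    exact ⟨hx.1, h3, h1, h2⟩
  have hcont : ContinuousOn f (Set.Ioo (0:ℝ) 1) :=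
    continuousOn_of_forall_continuousAt fun t ht => hcontAt t ht.1 ht.2
  -- integrability
  have hInt : IntegrableOn f (Set.Ioo (0:ℝ) b') := by
    refine ⟨((hcont.mono (Set.Ioo_subset_Ioo le_rfl hb'1)).aestronglyMeasurable
      measurableSet_Ioo), ?_⟩
    apply HasFiniteIntegral.restrict_of_bounded (C := 1) measure_Ioo_lt_top
    refine (ae_restrict_iff' measurableSet_Ioo).2 (Filter.Eventually.of_forall fun x hx => ?_)
    exact (hmem x hx).2.2.1
  -- F has derivative f x
  have hF' : ∀ x ∈ Set.Ioo (0:ℝ) b',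
      HasDerivAt (fun y : ℝ => ∫ t in Set.Ioo (0:ℝ) y, f t) (f x) x := by
    intro x hx
    have hx0 := hx.1
    have hint : IntervalIntegrable f volume 0 x := by
      rw [intervalIntegrable_iff_integrableOn_Ioc_of_le hx0.le]
      exact hInt.mono_set (fun t ht => ⟨ht.1, lt_of_le_of_lt ht.2 hx.2⟩)
    have hmeasAt : StronglyMeasurableAtFilter f (𝓝 x) :=
      hcont.stronglyMeasurableAtFilter isOpen_Ioo x ⟨hx0, lt_of_lt_of_le hx.2 hb'1⟩
    have hD : HasDerivAt (fun u : ℝ => ∫ t in (0:ℝ)..u, f t) (f x) x :=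
      intervalIntegral.integral_hasDerivAt_right hint hmeasAt
        (hcontAt x hx0 (lt_of_lt_of_le hx.2 hb'1))
    apply hD.congr_of_eventuallyEq
    have hxnhds : Set.Ioi (0:ℝ) ∈ 𝓝 x := isOpen_Ioi.mem_nhds hx0
    filter_upwards [hxnhds] with y (hy : 0 < y)
    rw [intervalIntegral.integral_of_le hy.le, integral_Ioc_eq_integral_Ioo]
  -- G has derivative f x * ψ x
  have hG' : ∀ x ∈ Set.Ioo (0:ℝ) b',
      HasDerivAt (fun x : ℝ => 1 / (α * β) *
        (x ^ (k + β + 1) * (Real.log (1 / x)) ^ m * Real.exp (-α / x ^ β)))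
        (f x * ψ x) x := fun x hx =>
    deriv_G α β k m hα hβ hx.1 (lt_of_lt_of_le hx.2 hb'1)
  -- g' nonzero
  have hg'ne : ∀ x ∈ Set.Ioo (0:ℝ) b', f x * ψ x ≠ 0 := by
    intro x hx
    obtain ⟨h0, h1, _, hψx⟩ := hmem x hx
    have hψ0 : (0:ℝ) < ψ x := lt_trans (by norm_num) hψx
    exact mul_ne_zero (hfpos x h0 h1).ne' hψ0.ne'
  -- F tends to 0
  have hFa : Tendsto (fun y : ℝ => ∫ t in Set.Ioo (0:ℝ) y, f t)
      (nhdsWithin 0 (Set.Ioi 0)) (𝓝 0) := by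
    apply squeeze_zero_norm' (a := fun y : ℝ => y)
    · filter_upwards [Ioo_mem_nhdsGT_of_mem (Set.mem_Ico.2 ⟨le_refl 0, hb'0⟩)] with x hx
      have : ‖∫ t in Set.Ioo (0:ℝ) x, f t‖ ≤ 1 * (volume (Set.Ioo (0:ℝ) x)).toReal := by
        apply norm_setIntegral_le_of_norm_le_const
        · exact measure_Ioo_lt_top
        · intro t ht
          exact (hmem t ⟨ht.1, ht.2.trans hx.2⟩).2.2.1
      simpa [Real.volume_Ioo, ENNReal.toReal_ofReal hx.1.le] using this
    · exact tendsto_id.mono_left nhdsWithin_le_nhds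
  -- G tends to 0
  have hGa : Tendsto (fun x : ℝ => 1 / (α * β) *
      (x ^ (k + β + 1) * (Real.log (1 / x)) ^ m * Real.exp (-α / x ^ β)))
      (nhdsWithin 0 (Set.Ioi 0)) (𝓝 0) := by
    have := (key_tendsto_zero α β (k + β + 1) m hα hβ).const_mul (1 / (α * β))
    simpa using this
  -- ratio of derivatives tends to 1
  have hdiv : Tendsto (fun x : ℝ => f x / (f x * ψ x)) (nhdsWithin 0 (Set.Ioi 0)) (𝓝 1) := by
    have h1 : Tendsto (fun x : ℝ => (ψ x)⁻¹) (nhdsWithin 0 (Set.Ioi 0)) (𝓝 1) := by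
      simpa using hψ.inv₀ one_ne_zero
    apply h1.congr'
    filter_upwards [Ioo_mem_nhdsGT_of_mem (Set.mem_Ico.2 ⟨le_refl 0, hb'0⟩)] with x hx
    obtain ⟨h0, hlt1, _, hψx⟩ := hmem x hx
    rw [div_mul_eq_div_div, div_self (hfpos x h0 hlt1).ne', one_div]
  exact HasDerivAt.lhopital_zero_right_on_Ioo hb'0 hF' hG' hg'ne hFa hGa hdiv
end
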